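/- (i) If M is in β-normal form and λ_l(M) = ε then M is not a lambda abstraction. (ii) If M is in quasi normal form with λ_l(M) = ε and M has a β-normal form, then the β-normal form of M is not a lambda abstraction. -/

import Mathlib

set_option maxHeartbeats 1000000

namespace ULC

/-- Variable names. -/
abbrev Name := Nat
/-- Positions (directed paths) in trees / terms. -/
abbrev Pos := List Nat

/-! ## Untyped lambda terms `Λ ::= x | (Λ Λ) | λx.Λ` -/

inductive Term where
  | var : Name → Term
  | app : Term → Term → Term
  | lam : Name → Term → Term
deriving DecidableEq

namespace Term

/-- Free variables of a term. -/
def fv : Term → List Name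
  | var x => [x]
  | app u v => fv u ++ fv v
  | lam x u => (fv u).filter (· != x)

def size : Term → Nat
  | var _ => 1
  | app u v => size u + size v + 1
  | lam _ u => size u + 1

/-- Naive renaming of a free variable (used only with a fresh target). -/
def rename (y z : Name) : Term → Term
  | var w => var (if w = y then z else w)
  | app u v => app (rename y z u) (rename y z v)
  | lam w u => if w = y then lam w u else lam w (rename y z u)

theorem size_rename (y z : Name) : ∀ t : Term, (t.rename y z).size = t.size := by
  intro t
  induction t with
  | var w => simp [rename, size]
  | app u v ihu ihv => simp [rename, size, ihu, ihv]
  | lam w u ih => by_cases h : w = y <;> simp [rename, size, h, ih]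

/-- A name fresh for a given list of names. -/
def fresh (l : List Name) : Name := l.foldr max 0 + 1

/-- Capture-avoiding substitution `subst x s t = t[x := s]`. -/
def subst (x : Name) (s : Term) : Term → Term
  | var y => if y = x then s else var y
  | app u v => app (subst x s u) (subst x s v)
  | lam y u =>
      if y = x then lam y u
      else if y ∈ s.fv ∧ x ∈ u.fv then
        let z := fresh (s.fv ++ u.fv ++ [x, y])
        lam z (subst x s (u.rename y z))
      else lam y (subst x s u)
termination_by t => t.size
decreasing_by
  all_goals simp only [size, size_rename]
  all_goals omega

end Term

/-! ## Beta reduction, alpha conversion -/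

/-- One step of β-reduction. -/
inductive Beta : Term → Term → Prop where
  | redex (x : Name) (u v : Term) :
      Beta (.app (.lam x u) v) (Term.subst x v u)
  | appL {u u' : Term} (v : Term) : Beta u u' → Beta (.app u v) (.app u' v)
  | appR (u : Term) {v v' : Term} : Beta v v' → Beta (.app u v) (.app u v')
  | lamC (x : Name) {u u' : Term} : Beta u u' → Beta (.lam x u) (.lam x u')

/-- α-equivalence. -/
inductive Alpha : Term → Term → Prop where
  | var (x : Name) : Alpha (.var x) (.var x)
  | app {u u' v v' : Term} :
      Alpha u u' → Alpha v v' → Alpha (.app u v) (.app u' v')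
  | lam {x y : Name} {u u' : Term} :
      (∀ z, z ∉ u.fv → z ∉ u'.fv → Alpha (u.rename x z) (u'.rename y z)) →
      Alpha (.lam x u) (.lam y u')

/-- Many-step β-reduction. -/
def BetaStar : Term → Term → Prop := Relation.ReflTransGen Beta

/-- β-equivalence (as usual in the named λ-calculus, modulo α-conversion). -/
def BetaEq : Term → Term → Prop :=
  Relation.EqvGen (fun a b => Beta a b ∨ Alpha a b)

/-- β-normal form: no redex, i.e. no β-step possible. -/
def IsBetaNormal (t : Term) : Prop := ∀ u, ¬ Beta t u

/-- `t` has a β-normal form. -/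
def HasBnf (t : Term) : Prop := ∃ n, BetaStar t n ∧ IsBetaNormal n

/-! ## Head lambda-list, generalized redexes, lloc -/

namespace Term

/-- The head lambda-list `λ_l`. -/
def lamList : Term → List Name
  | var _ => []
  | lam x u => x :: lamList u
  | app u _ => (lamList u).tail

/-- Subterm at a position (0 = under a λ or operator of an app, 1 = operand). -/
def subtermAt : Term → Pos → Option Term
  | t, [] => some t
  | lam _ u, 0 :: p => subtermAt u p
  | app u _, 0 :: p => subtermAt u p
  | app _ v, 1 :: p => subtermAt v p
  | _, _ => none

/-- Replace the subterm at a position. -/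
def replaceAt : Term → Pos → Term → Term
  | _, [], s => s
  | lam x u, 0 :: p, s => lam x (replaceAt u p s)
  | app u v, 0 :: p, s => app (replaceAt u p s) v
  | app u v, 1 :: p, s => app u (replaceAt v p s)
  | t, _, _ => t

/-- Positions of the abstractions listed in the head lambda-list. -/
def lamListPos : Term → List Pos
  | var _ => []
  | lam _ u => ([] : Pos) :: (lamListPos u).map (fun q => 0 :: q)
  | app u _ => ((lamListPos u).map (fun q => 0 :: q)).tail

/-- Generalized redexes: pairs (position of the λ-abstraction occurrence,
position of its argument). -/
def gr : Term → List (Pos × Pos)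
  | var _ => []
  | lam _ u => (gr u).map (fun r => (0 :: r.1, 0 :: r.2))
  | app u v =>
      (match lamListPos u with
        | [] => []
        | q :: _ => [((0 :: q : Pos), ([1] : Pos))]) ++
      (gr u).map (fun r => (0 :: r.1, 0 :: r.2)) ++
      (gr v).map (fun r => (1 :: r.1, 1 :: r.2))

/-- Position of the binder of the variable occurrence at `p` (if bound). -/
def binderAux : Term → Pos → Pos → List (Name × Pos) → Option Pos
  | var x, [], _, env => env.lookup x
  | lam y u, 0 :: p, cur, env => binderAux u p (cur ++ [0]) ((y, cur) :: env)
  | app u _, 0 :: p, cur, env => binderAux u p (cur ++ [0]) env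
  | app _ v, 1 :: p, cur, env => binderAux v p (cur ++ [1]) env
  | _, _, _, _ => none

def binderOf (M : Term) (p : Pos) : Option Pos := binderAux M p [] []

/-- The variable occurrence at `p` is involved in a generalized redex of `M`. -/
def involvedB (M : Term) (p : Pos) : Bool :=
  M.gr.any (fun r => binderOf M p == some r.1)

def Involved (M : Term) (p : Pos) : Prop := involvedB M p = true

/-- The leftmost linear occurrence `lloc`. -/
def llocAux (M : Term) : Term → Pos → Option Pos
  | var _, p => if involvedB M p then some p else none
  | lam _ u, p => llocAux M u (p ++ [0])
  | app u v, p =>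
      match llocAux M u (p ++ [0]) with
      | some q => some q
      | none => if u.lamList = [] then llocAux M v (p ++ [1]) else none

def lloc (M : Term) : Option Pos := llocAux M M []

end Term

/-- Quasi normal form: no leftmost linear occurrence. -/
def Qnf (M : Term) : Prop := M.lloc = none

/-- Names bound somewhere in the term. -/
def Term.bndrs : Term → List Name
  | .var _ => []
  | .app u v => u.bndrs ++ v.bndrs
  | .lam x u => x :: u.bndrs

/-- Barendregt convention: binder names are pairwise distinct and disjoint
from the free names. -/
def Barendregt (M : Term) : Prop :=
  M.bndrs.Nodup ∧ ∀ x ∈ M.bndrs, x ∉ M.fv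

/-- One step of leftmost linear reduction: linearly fire the generalized
redex involving the lloc (working up to α-conversion, which realizes the
capture-avoiding renaming). -/
def LinStep (M N : Term) : Prop :=
  ∃ M', Alpha M M' ∧ Barendregt M' ∧
    ∃ p lp ap A, M'.lloc = some p ∧ Term.binderOf M' p = some lp ∧
      (lp, ap) ∈ M'.gr ∧ Term.subtermAt M' ap = some A ∧
      Alpha N (Term.replaceAt M' p A)

/-- Firing a trivial redex `(λx.u)A` with `x ∉ fv u`. -/
def TrivStep (M N : Term) : Prop :=
  ∃ p x u A, Term.subtermAt M p = some (.app (.lam x u) A) ∧ x ∉ u.fv ∧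
    N = Term.replaceAt M p u

def IsRedexAt (M : Term) (p : Pos) : Prop :=
  ∃ x u A, Term.subtermAt M p = some (.app (.lam x u) A)

def HasRedex (M : Term) : Prop := ∃ p, IsRedexAt M p

/-- `q` occurs (strictly) to the left of `p`. -/
def PosLeft (q p : Pos) : Prop :=
  (∃ r a b s₁ s₂, q = r ++ a :: s₁ ∧ p = r ++ b :: s₂ ∧ a < b) ∨
  (q ≠ p ∧ q <+: p)

/-- A spinal-innermost redex: a β-redex whose operator body has no redex. -/
def SpinalInnermostAt (M : Term) (p : Pos) : Prop :=
  ∃ x u A, Term.subtermAt M p = some (.app (.lam x u) A) ∧ ¬ HasRedex u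

/-- The leftmost spinal-innermost redex of `M` is at `p`. -/
def LSIAt (M : Term) (p : Pos) : Prop :=
  SpinalInnermostAt M p ∧ ∀ q, SpinalInnermostAt M q → ¬ PosLeft q p

/-- One step of the leftmost spinal-innermost reduction strategy. -/
def LSIStep (M N : Term) : Prop :=
  ∃ p x u A, LSIAt M p ∧ Term.subtermAt M p = some (.app (.lam x u) A) ∧
    N = Term.replaceAt M p (Term.subst x A u)

/-! ## Head occurrence, hoc arguments, head reduction -/

/-- Position of the head (leftmost) variable occurrence. -/
def Term.hocPos : Term → Pos
  | .var _ => []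
  | .lam _ u => 0 :: u.hocPos
  | .app u _ => 0 :: u.hocPos

/-- Quasi-head-normal form: the hoc is not involved in a generalized redex. -/
def Qhnf (M : Term) : Prop := ¬ Term.Involved M M.hocPos

/-- The arguments of the head variable occurrence. -/
def Term.args : Term → List Term
  | .var _ => []
  | .lam _ u => u.args
  | .app u v => if u.lamList = [] then u.args ++ [v] else u.args

def Term.headIsVar : Term → Prop
  | .var _ => True
  | .app u _ => u.headIsVar
  | .lam _ _ => False

/-- Head normal form `λ x₁…xₙ. y A₁ … A_m`. -/
def IsHnf : Term → Prop
  | .var _ => True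
  | .app u _ => u.headIsVar
  | .lam _ u => IsHnf u

/-- One step of head reduction. -/
inductive HeadStep : Term → Term → Prop where
  | redex (x : Name) (u v : Term) :
      HeadStep (.app (.lam x u) v) (Term.subst x v u)
  | lamC (x : Name) {u u' : Term} : HeadStep u u' → HeadStep (.lam x u) (.lam x u')
  | appL {u u' : Term} (v : Term) :
      (∀ y w, u ≠ .lam y w) → HeadStep u u' → HeadStep (.app u v) (.app u' v)

/-- Number of arguments applied to the head variable. -/
def Term.headArgCount : Term → Nat
  | .var _ => 0
  | .lam _ u => u.headArgCount
  | .app u _ => u.headArgCount + 1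

/-! ## Simple types and eta-long forms -/

inductive Ty where
  | base : Ty
  | arrow : Ty → Ty → Ty
deriving DecidableEq

mutual
/-- `ELong Γ M A`: `M` is a simply-typed term in η-long form of type `A`. -/
inductive ELong : List (Name × Ty) → Term → Ty → Prop where
  | arrow {Γ x A B U} : ELong ((x, A) :: Γ) U B → ELong Γ (.lam x U) (.arrow A B)
  | base {Γ M} : ESpine Γ M .base → ELong Γ M .base

/-- Spines: a head (variable or abstraction) applied to η-long arguments. -/
inductive ESpine : List (Name × Ty) → Term → Ty → Prop where
  | var {Γ x A} : Γ.lookup x = some A → ESpine Γ (.var x) A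
  | head {Γ x U A B} : ELong Γ (.lam x U) (.arrow A B) → ESpine Γ (.lam x U) (.arrow A B)
  | app {Γ U V A B} : ESpine Γ U (.arrow A B) → ELong Γ V A → ESpine Γ (.app U V) B
end

/-! ## Computation trees -/

/-- Node kinds of the computation tree. -/
inductive NKind where
  | lam | var | app
deriving DecidableEq

/-- Node labels of the computation tree. -/
inductive NLabel where
  | lam : List Name → NLabel
  | var : Name → NLabel
  | app : NLabel
deriving DecidableEq

/-- Computation trees: bulk λ-nodes (with one child), variable nodes (with
λ-node children) and @-nodes (operator + operand λ-node children). -/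
inductive CT where
  | lam : List Name → CT → CT
  | var : Name → List CT → CT
  | app : CT → List CT → CT

instance : Inhabited CT := ⟨.var 0 []⟩

namespace CT

def kind : CT → NKind
  | .lam _ _ => .lam
  | .var _ _ => .var
  | .app _ _ => .app

def labelOf : CT → NLabel
  | .lam xs _ => .lam xs
  | .var z _ => .var z
  | .app _ _ => .app

/-- Arity of a node: number of bound variables / children / operands. -/
def arity : CT → Nat
  | .lam xs _ => xs.length
  | .var _ cs => cs.length
  | .app _ cs => cs.length

/-- The subtree rooted at a given path.  A λ-node's unique child has index 1;
the operator of an @-node has index 0 and its operands indices 1,…; the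
children of a variable node have indices 1,…. -/
def nodeAt : CT → Pos → Option CT
  | t, [] => some t
  | .lam _ c, 1 :: p => nodeAt c p
  | .var _ cs, (k + 1) :: p =>
      match cs[k]? with
      | some c => nodeAt c p
      | none => none
  | .app op _, 0 :: p => nodeAt op p
  | .app _ cs, (k + 1) :: p =>
      match cs[k]? with
      | some c => nodeAt c p
      | none => none
  | _, _ => none

end CT

mutual
def namesCT : CT → List Name
  | .lam xs c => xs ++ namesCT c
  | .var z cs => z :: namesL cs
  | .app op cs => namesCT op ++ namesL cs
def namesL : List CT → List Name
  | [] => []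
  | c :: cs => namesCT c ++ namesL cs
end

mutual
def freeNamesCT : CT → List Name
  | .lam xs c => (freeNamesCT c).filter (fun z => ! xs.contains z)
  | .var z cs => z :: freeNamesL cs
  | .app op cs => freeNamesCT op ++ freeNamesL cs
def freeNamesL : List CT → List Name
  | [] => []
  | c :: cs => freeNamesCT c ++ freeNamesL cs
end

/-- Canonical enumeration of the free variables of the tree. -/
def freeListCT (T : CT) : List Name := (freeNamesCT T).dedup

/-! ### The computation tree of a term -/

mutual
/-- The body node (variable or @) of the computation tree of a term. -/
def ctreeB : Term → CT
  | .var z => .var z []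
  | .lam x u =>
      .app (match ctreeL u with
            | .lam xs c => CT.lam (x :: xs) c
            | c => CT.lam [x] c) []
  | .app u v =>
      match ctreeB u with
      | .var z cts => .var z (cts ++ [ctreeL v])
      | .app op cts => .app op (cts ++ [ctreeL v])
      | c => c
termination_by t => 2 * t.size
decreasing_by all_goals (simp only [Term.size]; omega)
/-- The computation tree of a term (rooted at a bulk λ-node). -/
def ctreeL : Term → CT
  | .lam x u =>
      match ctreeL u with
      | .lam xs c => .lam (x :: xs) c
      | c => .lam [x] c
  | .var z => .lam [] (.var z [])
  | .app u v => .lam [] (ctreeB (.app u v))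
termination_by t => 2 * t.size + 1
decreasing_by all_goals (simp only [Term.size]; omega)
end

def ctree (M : Term) : CT := ctreeL M

/-! ### Binders in the computation tree -/

/-- `binderGo` walks a path maintaining the binding environment; returns the
(binder position, binding index) of the variable node at the end of the path. -/
def binderGo : CT → Pos → Pos → List (Name × (Pos × Nat)) → Option (Pos × Nat)
  | .var z _, [], _, env => env.lookup z
  | .lam xs c, 1 :: p, cur, env =>
      binderGo c p (cur ++ [1])
        ((((xs.zipIdx.map Prod.swap).map (fun e => (e.2, (cur, e.1 + 1)))).reverse) ++ env)
  | .var _ cs, (k + 1) :: p, cur, env =>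
      match cs[k]? with
      | some c => binderGo c p (cur ++ [k + 1]) env
      | none => none
  | .app op _, 0 :: p, cur, env => binderGo op p (cur ++ [0]) env
  | .app _ cs, (k + 1) :: p, cur, env =>
      match cs[k]? with
      | some c => binderGo c p (cur ++ [k + 1]) env
      | none => none
  | _, _, _, _ => none

/-- Binder (with binding index) of a variable node in the computation tree. -/
def binderInCT (T : CT) (q : Pos) : Option (Pos × Nat) := binderGo T q [] []

/-! ### Generalized redexes at the level of computation trees -/

def seqPre (k : Nat) (l : List (Pos × Nat)) : List (Pos × Nat) :=
  l.map (fun s => (k :: s.1, s.2))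

/-- The slots (binder position, binding index) of the head lambda-list. -/
def ctLamSlots : CT → List (Pos × Nat)
  | .lam xs c =>
      (List.range xs.length).map (fun j => (([] : Pos), j + 1))
        ++ seqPre 1 (ctLamSlots c)
  | .var _ _ => []
  | .app op cs => (seqPre 0 (ctLamSlots op)).drop cs.length

def preRedex (k : Nat) (l : List ((Pos × Nat) × (Pos × Nat))) :
    List ((Pos × Nat) × (Pos × Nat)) :=
  l.map (fun r => ((k :: r.1.1, r.1.2), (k :: r.2.1, r.2.2)))

mutual
/-- Generalized redexes of a computation tree: pairs of a lambda slot
(binder position, binding index) and an argument (position of the @-node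
where it is consumed, operand index). -/
def ctGr : CT → List ((Pos × Nat) × (Pos × Nat))
  | .lam _ c => preRedex 1 (ctGr c)
  | .var _ cs => ctGrL 1 cs
  | .app op cs =>
      ((((seqPre 0 (ctLamSlots op)).take cs.length).zipIdx.map Prod.swap).map
        (fun e => (e.2, (([] : Pos), e.1 + 1))))
      ++ preRedex 0 (ctGr op) ++ ctGrL 1 cs
def ctGrL : Nat → List CT → List ((Pos × Nat) × (Pos × Nat))
  | _, [] => []
  | k, c :: cs => preRedex k (ctGr c) ++ ctGrL (k + 1) cs
end

/-- The variable node at `q` is involved in a generalized redex of `T`. -/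
def involvedCT (T : CT) (q : Pos) : Bool :=
  match binderInCT T q with
  | some bi => (ctGr T).any (fun r => r.1 == bi)
  | none => false

/-- Length of the head lambda-list of (the term denoted by) a tree. -/
def ctLamLen : CT → Nat
  | .lam xs c => xs.length + ctLamLen c
  | .var _ _ => 0
  | .app op cs => ctLamLen op - cs.length

mutual
/-- The lloc of the subtree `t` of `T` located at absolute position `q`
(involvement is computed with respect to the whole tree `T`). -/
def llocCT (T : CT) : CT → Pos → Option Pos
  | .lam _ c, q => llocCT T c (q ++ [1])
  | .var _ cs, q =>
      if involvedCT T q then some q else llocArgs T cs q 0 1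
  | .app op cs, q =>
      match llocCT T op (q ++ [0]) with
      | some r => some r
      | none => llocArgs T cs q (ctLamLen op) 1
def llocArgs (T : CT) : List CT → Pos → Nat → Nat → Option Pos
  | [], _, _, _ => none
  | a :: rest, q, l, k =>
      if l = 0 then
        match llocCT T a (q ++ [k]) with
        | some r => some r
        | none => llocArgs T rest q 0 (k + 1)
      else llocArgs T rest q (l - 1) (k + 1)
end

/-- The lloc of the subterm rooted at node `p` of the tree `T`. -/
def llocNode (T : CT) (p : Pos) : Option Pos :=
  match T.nodeAt p with
  | some sub => llocCT T sub p
  | none => none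
/-! ## Extended nodes: structural nodes and ghost nodes -/

/-- Extended nodes: structural nodes (paths of the computation tree) and
ghost nodes, determined by their enabler and a label `k` exceeding its arity. -/
inductive ENode where
  | s : Pos → ENode
  | g : ENode → Nat → ENode
deriving DecidableEq

instance : Inhabited ENode := ⟨.s []⟩

def kindAt (T : CT) (p : Pos) : Option NKind := (T.nodeAt p).map CT.kind

def arityAt (T : CT) (p : Pos) : Nat := ((T.nodeAt p).map CT.arity).getD 0

/-- Bound variables of the λ-node at `p`. -/
def boundAt (T : CT) (p : Pos) : List Name :=
  match T.nodeAt p with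
  | some (.lam xs _) => xs
  | _ => []

namespace ENode

/-- Kind of an extended node (ghosts alternate kinds with their enabler). -/
def kindIn (T : CT) : ENode → Option NKind
  | .s p => kindAt T p
  | .g e _ =>
      match e.kindIn T with
      | some .lam => some .var
      | some _ => some .lam
      | none => none

/-- Arity of an extended node (ghost nodes have arity 0). -/
def arityIn (T : CT) : ENode → Nat
  | .s p => arityAt T p
  | .g _ _ => 0

def isGhost : ENode → Bool
  | .s _ => false
  | .g _ _ => true

end ENode

/-- The unique enabler of a structural node: λ-nodes are enabled by their
parent (with the child index as label), variable nodes by their binder (with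
the binding index) or by the root (with a label indexing the free variable
beyond the root's arity); @-nodes have no enabler. -/
def enablerF (T : CT) (p : Pos) : Option (Pos × Nat) :=
  match T.nodeAt p with
  | none => none
  | some (.app _ _) => none
  | some (.lam _ _) =>
      if h : p = [] then none else some (p.dropLast, p.getLast h)
  | some (.var z _) =>
      match binderInCT T p with
      | some b => some b
      | none => some (([] : Pos), arityAt T [] + 1 + (freeListCT T).idxOf z)

/-- Structural enabling relation `bp ⊢_k q`. -/
def EnablesS (T : CT) (bp : Pos) (k : Nat) (q : Pos) : Prop :=
  (q = bp ++ [k] ∧ (T.nodeAt q).isSome = true ∧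
    (kindAt T bp = some .var ∨ kindAt T bp = some .app))
  ∨ (kindAt T q = some .var ∧ binderInCT T q = some (bp, k))
  ∨ (binderInCT T q = none ∧ bp = [] ∧
      ∃ z cs, T.nodeAt q = some (.var z cs) ∧
        k = arityAt T [] + 1 + (freeListCT T).idxOf z)

def extPB (T : CT) : Nat → Pos → Bool
  | 0, _ => false
  | fuel + 1, p =>
      if p = [] then true
      else
        match enablerF T p with
        | none => false
        | some (q, _) => extPB T fuel q

/-- External nodes: hereditarily enabled by the root. -/
def ENode.extIn (T : CT) : ENode → Bool
  | .s p => extPB T (p.length + 1) p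
  | .g e _ => e.extIn T

/-! ## Justified sequences of nodes

A justified sequence is represented as a list of occurrences in **reverse
chronological order** (the head of the list is the last occurrence).  Each
occurrence carries a pointer given by a distance `dist` (`0` = no pointer)
and a label `jlab`, together with a list `pend` of *pending lambdas*. -/

structure Occ where
  node : ENode
  dist : Nat
  jlab : Nat
  pend : List Name
deriving DecidableEq

instance : Inhabited Occ := ⟨⟨.s [], 0, 0, []⟩⟩

/-- The occurrence of the root of the tree. -/
def rootOcc : Occ := ⟨.s [], 0, 0, []⟩

/-- Indices (into the reversed sequence) of the occurrences retained by the
P-view. -/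
def pviewIdx (T : CT) : List Occ → List Nat
  | [] => []
  | o :: s =>
      if o.node.kindIn T = some .lam then
        if o.dist = 0 then [0]
        else 0 :: o.dist :: ((pviewIdx T (s.drop o.dist)).map (fun i => i + o.dist + 1))
      else 0 :: (pviewIdx T s).map (fun i => i + 1)
termination_by s => s.length
decreasing_by
  all_goals simp [List.length_drop]
  all_goals omega

/-- Indices of the occurrences retained by the O-view. -/
def oviewIdx (T : CT) : List Occ → List Nat
  | [] => []
  | o :: s =>
      if o.node.kindIn T = some .lam then 0 :: (oviewIdx T s).map (fun i => i + 1)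
      else
        if o.dist = 0 then [0]
        else 0 :: o.dist :: ((oviewIdx T (s.drop o.dist)).map (fun i => i + o.dist + 1))
termination_by s => s.length
decreasing_by
  all_goals simp [List.length_drop]
  all_goals omega

/-- Extract the subsequence of `s` given by indices (with pending-lambda
data), recomputing justification pointers within the subsequence. -/
def extractK (s : List Occ) (ks : List (Nat × List Name)) (setPend : Bool) :
    List Occ :=
  let idxs := ks.map Prod.fst
  (ks.zipIdx.map Prod.swap).map (fun e =>
    let a := e.1
    let i := e.2.1
    let o := (s[i]?).getD default
    let d :=
      if o.dist = 0 then 0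
      else
        let b := idxs.idxOf (i + o.dist)
        if b < idxs.length ∧ a < b then b - a else 0
    { o with dist := d, pend := if setPend then e.2.2 else o.pend })

/-- The P-view of a justified sequence. -/
def pview (T : CT) (s : List Occ) : List Occ :=
  extractK s ((pviewIdx T s).map (fun i => (i, ([] : List Name)))) false

/-- The O-view of a justified sequence. -/
def oview (T : CT) (s : List Occ) : List Occ :=
  extractK s ((oviewIdx T s).map (fun i => (i, ([] : List Name)))) false

/-- Follow justification pointers from index `i`; returns the index of the
final pointer-less occurrence. -/
def chainEnd (s : List Occ) : Nat → Nat → Option Nat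
  | 0, _ => none
  | fuel + 1, i =>
      match s[i]? with
      | none => none
      | some o => if o.dist = 0 then some i else chainEnd s fuel (i + o.dist)

def herEnd (s : List Occ) (i : Nat) : Option Nat := chainEnd s s.length i

/-- The occurrence at index `i` is hereditarily justified by the root. -/
def HerRoot (s : List Occ) (i : Nat) : Prop :=
  ∃ j o, herEnd s i = some j ∧ s[j]? = some o ∧ o.node = ENode.s []

/-- The occurrence at index `i` is hereditarily justified by an @-node. -/
def HerApp (T : CT) (s : List Occ) (i : Nat) : Prop :=
  ∃ j o, herEnd s i = some j ∧ s[j]? = some o ∧ o.node.kindIn T = some .app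

/-! ## Arity threshold -/

/-- Auxiliary computation of the arity threshold along the last strand. -/
def athZ (T : CT) : List Occ → Int → Int
  | nq :: aq :: rest, acc =>
      if aq.node.extIn T then 0
      else
        max ((nq.node.arityIn T : Int) + acc)
            (athZ T rest (acc + (nq.node.arityIn T : Int) - (aq.node.arityIn T : Int)))
  | _, _ => 0

/-- The arity threshold of a traversal ending with an external variable. -/
def ath (T : CT) (s : List Occ) : Nat := (athZ T s 0).toNat

/-! ## Imaginary traversals (Table 1) and their restrictions -/

/-- Configuration selecting the variants of the traversal rules. -/
structure TravCfg where
  branch : Bool   -- rule IVar restricted to justifier = last occurrence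
  bound : Bool    -- rule IVar label bounded by the arity threshold
  etaVar : Bool   -- eta-expanded subcase of rule Var allowed
  etaIVar : Bool  -- eta-expanded subcase of rule IVar allowed
  ghostLam : Bool -- rule Lam^ghost allowed

/-- The traversal rules (Table 1 of the paper, and its restrictions). -/
inductive TravR (T : CT) (cfg : TravCfg) : List Occ → Prop where
  | root : TravR T cfg [rootOcc]
  | app {s : List Occ} {o : Occ} {p : Pos} :
      TravR T cfg (o :: s) →
      o.node = .s p → kindAt T p = some .app →
      TravR T cfg (⟨.s (p ++ [0]), 1, 0, []⟩ :: o :: s)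
  | lamApp {s : List Occ} {o : Occ} {p : Pos} :
      TravR T cfg (o :: s) →
      o.node = .s p → kindAt T p = some .lam →
      kindAt T (p ++ [1]) = some .app →
      TravR T cfg (⟨.s (p ++ [1]), 0, 0, []⟩ :: o :: s)
  | lamVar {s : List Occ} {o j : Occ} {p bp : Pos} {d k : Nat} :
      TravR T cfg (o :: s) →
      o.node = .s p → kindAt T p = some .lam →
      kindAt T (p ++ [1]) = some .var →
      1 ≤ d → (o :: s)[d - 1]? = some j → j.node = .s bp →
      EnablesS T bp k (p ++ [1]) →
      (d - 1) ∈ pviewIdx T (o :: s) →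
      TravR T cfg (⟨.s (p ++ [1]), d, k, []⟩ :: o :: s)
  | lamGhost {s : List Occ} {gl n a : Occ} :
      cfg.ghostLam = true →
      TravR T cfg (gl :: s) →
      gl.node.isGhost = true → gl.node.kindIn T = some .lam →
      1 ≤ gl.dist → s[gl.dist - 1]? = some n → s[gl.dist]? = some a →
      n.node.kindIn T = some .var → a.node.kindIn T = some .lam →
      TravR T cfg
        (⟨.g a.node (a.node.arityIn T + gl.jlab - n.node.arityIn T),
          gl.dist + 2, a.node.arityIn T + gl.jlab - n.node.arityIn T, []⟩ :: gl :: s)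
  | varC {s : List Occ} {n a m : Occ} {q : Pos} :
      TravR T cfg (n :: s) →
      n.node.kindIn T = some .var →
      HerApp T (n :: s) 0 →
      1 ≤ n.dist → 1 ≤ n.jlab →
      s[n.dist - 1]? = some a → a.node.kindIn T = some .lam →
      s[n.dist]? = some m →
      (m.node.kindIn T = some .var ∨ m.node.kindIn T = some .app) →
      m.node = .s q → n.jlab ≤ arityAt T q →
      TravR T cfg (⟨.s (q ++ [n.jlab]), n.dist + 2, n.jlab, []⟩ :: n :: s)
  | varE {s : List Occ} {n a m : Occ} :
      cfg.etaVar = true →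
      TravR T cfg (n :: s) →
      n.node.kindIn T = some .var →
      HerApp T (n :: s) 0 →
      1 ≤ n.dist → 1 ≤ n.jlab →
      s[n.dist - 1]? = some a → a.node.kindIn T = some .lam →
      s[n.dist]? = some m →
      (m.node.kindIn T = some .var ∨ m.node.kindIn T = some .app) →
      m.node.arityIn T < n.jlab →
      TravR T cfg (⟨.g m.node n.jlab, n.dist + 2, n.jlab, []⟩ :: n :: s)
  | ivarC {s : List Occ} {n m : Occ} {q : Pos} {jm i : Nat} :
      TravR T cfg (n :: s) →
      n.node.kindIn T = some .var →
      (cfg.branch = true → n.node.extIn T = true) →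
      (cfg.branch = false → HerRoot (n :: s) 0) →
      1 ≤ i →
      (n :: s)[jm]? = some m → m.node.kindIn T = some .var →
      jm ∈ oviewIdx T (n :: s) →
      (cfg.branch = true → jm = 0) →
      (cfg.bound = true → i ≤ ath T (n :: s)) →
      m.node = .s q → i ≤ arityAt T q →
      TravR T cfg (⟨.s (q ++ [i]), jm + 1, i, []⟩ :: n :: s)
  | ivarE {s : List Occ} {n m : Occ} {jm i : Nat} :
      cfg.etaIVar = true →
      TravR T cfg (n :: s) →
      n.node.kindIn T = some .var →
      (cfg.branch = true → n.node.extIn T = true) →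
      (cfg.branch = false → HerRoot (n :: s) 0) →
      1 ≤ i →
      (n :: s)[jm]? = some m → m.node.kindIn T = some .var →
      jm ∈ oviewIdx T (n :: s) →
      (cfg.branch = true → jm = 0) →
      (cfg.bound = true → i ≤ ath T (n :: s)) →
      m.node.arityIn T < i →
      TravR T cfg (⟨.g m.node i, jm + 1, i, []⟩ :: n :: s)

/-- Imaginary traversals of the untyped λ-calculus (Table 1). -/
def Trav (T : CT) : List Occ → Prop :=
  TravR T ⟨false, false, true, true, true⟩

/-- Branching traversals: rule IVar points to the last occurrence. -/
def TravB (T : CT) : List Occ → Prop :=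
  TravR T ⟨true, false, true, true, true⟩

/-- Normalizing traversals (Table 2): branching + arity-threshold bound. -/
def TravN (T : CT) : List Occ → Prop :=
  TravR T ⟨true, true, true, true, true⟩

/-- STLC traversals: no ghost rules at all. -/
def TravSTLC (T : CT) : List Occ → Prop :=
  TravR T ⟨false, false, false, false, false⟩

/-- Traversals without the eta-expanded subcase of rule IVar. -/
def TravNoEtaIVar (T : CT) : List Occ → Prop :=
  TravR T ⟨false, false, true, false, true⟩

/-- Chronological prefix of length `n` of an infinite sequence of
occurrences, in reverse representation. -/
def prefixRev (f : Nat → Occ) (n : Nat) : List Occ :=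
  ((List.range n).map f).reverse
/-! ## Justified paths of the computation tree -/

/-- Justified paths: paths of the computation tree from the root, equipped
with the induced justification pointers (bound variables point to their
binder with the binding index, free variables to the root, λ-nodes to their
parent with the child index). -/
inductive JPath (T : CT) : List Occ → Prop where
  | root : JPath T [rootOcc]
  | lam {s : List Occ} {o : Occ} {p : Pos} {k : Nat} :
      JPath T (o :: s) → o.node = .s p →
      (kindAt T p = some .var ∨ kindAt T p = some .app) →
      (T.nodeAt (p ++ [k])).isSome = true → kindAt T (p ++ [k]) = some .lam →
      JPath T (⟨.s (p ++ [k]), 1, k, []⟩ :: o :: s)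
  | appNode {s : List Occ} {o : Occ} {p : Pos} :
      JPath T (o :: s) → o.node = .s p → kindAt T p = some .lam →
      kindAt T (p ++ [1]) = some .app →
      JPath T (⟨.s (p ++ [1]), 0, 0, []⟩ :: o :: s)
  | varNode {s : List Occ} {o j : Occ} {p bp : Pos} {d k : Nat} :
      JPath T (o :: s) → o.node = .s p → kindAt T p = some .lam →
      kindAt T (p ++ [1]) = some .var →
      1 ≤ d → (o :: s)[d - 1]? = some j → j.node = .s bp →
      EnablesS T bp k (p ++ [1]) →
      JPath T (⟨.s (p ++ [1]), d, k, []⟩ :: o :: s)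

/-- Maximal justified paths. -/
def MaxJPath (T : CT) (s : List Occ) : Prop :=
  JPath T s ∧ ∀ o, ¬ JPath T (o :: s)

/-- Label of an occurrence (structural nodes only). -/
def labOf (T : CT) (o : Occ) : Option NLabel :=
  match o.node with
  | .s p => (T.nodeAt p).map CT.labelOf
  | .g _ _ => none

/-! ## Structures of justified sequences -/

/-- The structure of an occurrence: node kind, pointer distance, pointer
label (node labels are forgotten). -/
structure OccStr where
  kind : Option NKind
  dist : Nat
  jlab : Nat
deriving DecidableEq

/-- The structure of a justified sequence. -/
def strOf (T : CT) (s : List Occ) : List OccStr :=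
  s.map (fun o => ⟨o.node.kindIn T, o.dist, o.jlab⟩)

/-! ## Core projection -/

/-- Indices (with pending-lambda relabelling data) retained by the core
projection, computed with a stack `ys` of pending lambdas. -/
def coreIdx (T : CT) : List Occ → List Name → List (Nat × List Name)
  | [], _ => []
  | o :: s, ys =>
      match o.node.kindIn T with
      | some .var =>
          if o.node.extIn T then
            (0, o.pend) :: (coreIdx T s []).map (fun e => (e.1 + 1, e.2))
          else (coreIdx T s (ys.drop (o.node.arityIn T))).map (fun e => (e.1 + 1, e.2))
      | some .app =>
          (coreIdx T s (ys.drop (o.node.arityIn T))).map (fun e => (e.1 + 1, e.2))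
      | some .lam =>
          if o.node.extIn T then
            (0, o.pend ++ ys) :: (coreIdx T s []).map (fun e => (e.1 + 1, e.2))
          else
            match o.node with
            | .s p =>
                (coreIdx T s (boundAt T p ++ o.pend ++ ys)).map (fun e => (e.1 + 1, e.2))
            | .g _ _ => (coreIdx T s (o.pend ++ ys)).map (fun e => (e.1 + 1, e.2))
      | none => (coreIdx T s ys).map (fun e => (e.1 + 1, e.2))

/-- The core of a justified sequence: the subsequence of external occurrences,
with pending lambdas prepended to the labels of external λ-nodes. -/
def core (T : CT) (s : List Occ) : List Occ :=
  extractK s (coreIdx T s []) true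

/-! ## On-the-fly eta-expansion -/

def modArg : List CT → Nat → (CT → CT) → List CT
  | [], _, _ => []
  | c :: cs, 0, f => f c :: cs
  | c :: cs, k + 1, f => c :: modArg cs k f

def CT.modifyAt : CT → Pos → (CT → CT) → CT
  | t, [], f => f t
  | .lam xs c, 1 :: p, f => .lam xs (c.modifyAt p f)
  | .var z cs, (k + 1) :: p, f => .var z (modArg cs k (fun c => c.modifyAt p f))
  | .app op cs, 0 :: p, f => .app (op.modifyAt p f) cs
  | .app op cs, (k + 1) :: p, f => .app op (modArg cs k (fun c => c.modifyAt p f))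
  | t, _, _ => t
termination_by t p _ => p.length
decreasing_by all_goals simp

def freshCT (T : CT) : Name := (namesCT T).foldr max 0 + 1

/-- One eta-expansion step at the variable/@-node `q`: the subterm `N`
rooted at `q` is replaced by `λθ. N θ` for a fresh `θ` (in the computation
tree, `θ` is appended to the bound variables of the parent λ-node and a new
operand `λ⟨θ⟩` is appended to the children of `q`). -/
def etaStep (T : CT) (q : Pos) : CT :=
  let θ := freshCT T
  let T1 := T.modifyAt q (fun n =>
    match n with
    | .var z cs => .var z (cs ++ [.lam [] (.var θ [])])
    | .app op cs => .app op (cs ++ [.lam [] (.var θ [])])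
    | t => t)
  T1.modifyAt q.dropLast (fun n =>
    match n with
    | .lam xs c => .lam (xs ++ [θ]) c
    | t => t)

/-- Process the occurrences of a traversal chronologically, performing an
eta-expansion at the justifier of each ghost λ-node occurrence (the
eta-expanded subcases of rules Var and IVar); `acc` records the materialized
position of each processed occurrence. -/
def etaFoldGo : CT → List Pos → List Occ → CT
  | T, _, [] => T
  | T, acc, o :: os =>
      match o.node with
      | .s p => etaFoldGo T (p :: acc) os
      | .g _ i =>
          if o.node.kindIn T = some .lam then
            let q := acc.getD (o.dist - 1) []
            etaFoldGo (etaStep T q) ((q ++ [i]) :: acc) os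
          else
            let q := acc.getD 0 []
            etaFoldGo T ((q ++ [1]) :: acc) os

/-- The on-the-fly eta-expansion `M^t` of (the computation tree of) a term
with respect to a finite traversal `t`. -/
def etaExpCT (T : CT) (t : List Occ) : CT := etaFoldGo T [] t.reverse

/-- Element-wise, pointer-preserving extension of a map on extended nodes to
justified sequences. -/
def mapOcc (η : ENode → ENode) (s : List Occ) : List Occ :=
  s.map (fun o => { o with node := η o.node })

/-! ## Isomorphisms of sets of justified sequences -/

/-- Structure-preserving bijection between two sets of justified sequences
(over trees `T₁` and `T₂` respectively). -/
def StrIso (T₁ T₂ : CT) (S₁ S₂ : Set (List Occ)) : Prop :=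
  ∃ φ : List Occ → List Occ, Set.BijOn φ S₁ S₂ ∧
    ∀ s ∈ S₁, strOf T₂ (φ s) = strOf T₁ s

/-- The set of cores of normalizing traversals of a term. -/
def CoreSet (M : Term) : Set (List Occ) :=
  {c | ∃ t, TravN (ctree M) t ∧ c = core (ctree M) t}

/-- The set of structures of core P-views of normalizing traversals
(the quotient `Trav^n(M)/∼`, each class identified with the common structure
of the core P-views of its members). -/
def QuotSet (M : Term) : Set (List OccStr) :=
  {x | ∃ t, TravN (ctree M) t ∧
        x = strOf (ctree M) (pview (ctree M) (core (ctree M) t))}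
/-! ## Strands (for the weaving proposition) -/

/-- `n_q` of the last strand: the (var/@)-occurrence at index `2(q-1)` of the
reversed sequence (`q` counted from 1, so `n_1` is the last occurrence). -/
def nOcc (t : List Occ) (q : Nat) : Occ := (t[2 * (q - 1)]?).getD default

/-- `α_q` of the last strand: the λ-occurrence at index `2q - 1`. -/
def aOcc (t : List Occ) (q : Nat) : Occ := (t[2 * q - 1]?).getD default

def nAr (T : CT) (t : List Occ) (q : Nat) : Int := ((nOcc t q).node.arityIn T : Int)
def aAr (T : CT) (t : List Occ) (q : Nat) : Int := ((aOcc t q).node.arityIn T : Int)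

/-- `i_q = i - ∑_{j=1}^{q-1} (|n_j| - |α_j|)`. -/
def iSeq (T : CT) (t : List Occ) (i : Nat) (q : Nat) : Int :=
  (i : Int) - ∑ j ∈ Finset.Ico 1 q, (nAr T t j - aAr T t j)

/-- The last strand of `t` has length `2k`: it starts with an external
λ-node `α_k`, ends with the last occurrence `n_1`, an external variable,
and all the `2k - 2` occurrences in between are internal, alternating
between λ-nodes and variable/@-nodes. -/
def LastStrand (T : CT) (t : List Occ) (k : Nat) : Prop :=
  1 ≤ k ∧ 2 * k ≤ t.length ∧
  (∀ q, 1 ≤ q → q ≤ k →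
    ((nOcc t q).node.kindIn T = some .var ∨ (nOcc t q).node.kindIn T = some .app)) ∧
  (∀ q, 1 ≤ q → q ≤ k → (aOcc t q).node.kindIn T = some .lam) ∧
  (nOcc t 1).node.kindIn T = some .var ∧ (nOcc t 1).node.extIn T = true ∧
  (aOcc t k).node.extIn T = true ∧
  (∀ j, 1 ≤ j → j ≤ 2 * k - 2 → ∀ o, t[j]? = some o → o.node.extIn T = false)

/-! ## Spinal paths (for the generalized redex argument lookup) -/

/-- Position of `@_j` on the spinal descent below the @-node at `a`
(`@_r = a` is the topmost one, `@_1` the lowest). -/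
def atPos (a : Pos) (r j : Nat) : Pos :=
  a ++ (List.replicate (r - j) ([0, 1] : Pos)).flatten

/-- The sequence `i_1 = i`, `i_{j+1} = i_j - |@_j| + |λx̄_{j+1}|` along the
spinal descent. -/
def iSeqL (T : CT) (a : Pos) (r i : Nat) : Nat → Int
  | 0 => (i : Int)
  | 1 => (i : Int)
  | j + 1 =>
      iSeqL T a r i j - (arityAt T (atPos a r j) : Int)
        + (arityAt T (atPos a r (j + 1) ++ [0]) : Int)
end ULC

namespace Stmt15Aux
open ULC

/-- Pending-argument count when descending to a position. -/
def pendAt : Term → Pos → Nat → Option Nat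
  | _, [], n => some n
  | .lam _ u, 0 :: p, n => pendAt u p (n - 1)
  | .app u _, 0 :: p, n => pendAt u p (n + 1)
  | .app _ v, 1 :: p, _ => pendAt v p 0
  | _, _, _ => none

/-- Spine goodness: every spine lambda is matched by a pending argument and
the spine head variable avoids the matched binders. -/
def SG : List Name → Term → Nat → Prop
  | bad, .var x, _ => x ∉ bad
  | bad, .app u _, n => SG bad u (n + 1)
  | _, .lam _ _, 0 => False
  | bad, .lam x u, n + 1 => SG (x :: bad) u n

theorem SG_congr : ∀ (t : Term) (n : Nat) (b₁ b₂ : List Name),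
    (∀ w, w ∈ b₁ ↔ w ∈ b₂) → SG b₁ t n → SG b₂ t n := by
  intro t
  induction t with
  | var x => intro n b₁ b₂ h hs; simp only [SG] at *; exact fun hm => hs ((h x).2 hm)
  | app u v ihu ihv => intro n b₁ b₂ h hs; exact ihu (n+1) b₁ b₂ h hs
  | lam x u ih =>
      intro n b₁ b₂ h hs
      cases n with
      | zero => exact hs.elim
      | succ n =>
          refine ih n (x :: b₁) (x :: b₂) ?_ hs
          intro w; simp only [List.mem_cons]; rw [h w]

theorem SG_cons_iff : ∀ (t : Term) (n : Nat) (bad : List Name) (z : Name),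
    z ∉ t.fv → (SG (z :: bad) t n ↔ SG bad t n) := by
  intro t
  induction t with
  | var x =>
      intro n bad z hz
      simp only [Term.fv, List.mem_singleton] at hz
      simp only [SG, List.mem_cons]
      constructor
      · intro h hm; exact h (Or.inr hm)
      · intro h hm; rcases hm with h1 | h1
        · exact hz h1.symm
        · exact h h1
  | app u v ihu ihv =>
      intro n bad z hz
      simp only [Term.fv, List.mem_append] at hz
      exact ihu (n+1) bad z (fun h => hz (Or.inl h))
  | lam x u ih =>
      intro n bad z hz
      cases n with
      | zero => simp [SG]
      | succ n =>
          simp only [SG]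
          by_cases hzx : z = x
          · subst hzx
            constructor
            · exact SG_congr u n (z :: z :: bad) (z :: bad) (by intro w; simp only [List.mem_cons]; tauto)
            · exact SG_congr u n (z :: bad) (z :: z :: bad) (by intro w; simp only [List.mem_cons]; tauto)
          · have hzu : z ∉ u.fv := by
              intro hm
              apply hz
              simp only [Term.fv, List.mem_filter, bne_iff_ne, ne_eq, decide_eq_true_eq]
              exact ⟨hm, by simpa using hzx⟩
            constructor
            · intro h
              have := SG_congr u n (x :: z :: bad) (z :: x :: bad)
                (by intro w; simp only [List.mem_cons]; tauto) h
              exact (ih n (x :: bad) z hzu).1 this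
            · intro h
              have := (ih n (x :: bad) z hzu).2 h
              exact SG_congr u n (z :: x :: bad) (x :: z :: bad)
                (by intro w; simp only [List.mem_cons]; tauto) this

theorem SG_rename_mem : ∀ (t : Term) (n : Nat) (bad : List Name) (y z : Name),
    y ∈ bad → z ∈ bad → SG bad t n → SG bad (t.rename y z) n := by
  intro t
  induction t with
  | var x =>
      intro n bad y z hy hz hs
      simp only [SG] at hs
      have hxy : x ≠ y := fun h => hs (h ▸ hy)
      simp only [Term.rename, if_neg hxy, SG]
      exact hs
  | app u v ihu ihv =>
      intro n bad y z hy hz hs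
      simp only [Term.rename, SG] at *
      exact ihu (n+1) bad y z hy hz hs
  | lam x u ih =>
      intro n bad y z hy hz hs
      cases n with
      | zero => exact hs.elim
      | succ n =>
          by_cases hxy : x = y
          · simp only [Term.rename, if_pos hxy]; exact hs
          · simp only [Term.rename, if_neg hxy, SG] at *
            exact ih n (x :: bad) y z (List.mem_cons_of_mem _ hy)
              (List.mem_cons_of_mem _ hz) hs

theorem fv_rename_self : ∀ (t : Term) (y z : Name), y ≠ z → y ∉ (t.rename y z).fv := by
  intro t
  induction t with
  | var x =>
      intro y z hyz
      by_cases hxy : x = y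
      · simp only [Term.rename, if_pos hxy, Term.fv, List.mem_singleton]
        exact hyz
      · simp only [Term.rename, if_neg hxy, Term.fv, List.mem_singleton]
        exact fun h => hxy h.symm
  | app u v ihu ihv =>
      intro y z hyz
      simp only [Term.rename, Term.fv, List.mem_append]
      rintro (h | h)
      · exact ihu y z hyz h
      · exact ihv y z hyz h
  | lam x u ih =>
      intro y z hyz
      by_cases hxy : x = y
      · subst hxy
        simp [Term.rename, Term.fv, List.mem_filter]
      · simp only [Term.rename, if_neg hxy, Term.fv, List.mem_filter]
        rintro ⟨h, -⟩; exact ih y z hyz h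

theorem le_foldr_max : ∀ (l : List Name) (x : Name), x ∈ l → x ≤ l.foldr max 0 := by
  intro l
  induction l with
  | nil => intro x h; exact absurd h List.not_mem_nil
  | cons a l ih =>
      intro x h
      rw [List.foldr_cons]
      rcases List.mem_cons.1 h with h | h
      · subst h; exact le_max_left _ _
      · exact le_trans (ih x h) (le_max_right _ _)

theorem fresh_not_mem (l : List Name) (x : Name) (h : x ∈ l) : x ≠ Term.fresh l := by
  intro hx
  have h2 := le_foldr_max l x h
  rw [hx] at h2
  unfold Term.fresh at h2
  exact Nat.not_succ_le_self _ h2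

theorem size_pos : ∀ t : Term, 1 ≤ t.size := by
  intro t; cases t <;> (simp only [Term.size]; omega)

theorem SG_subst_aux (a : Name) (A : Term) :
    ∀ (m : Nat) (t : Term), t.size ≤ m → ∀ (bad : List Name) (n : Nat),
      SG (a :: bad) t n → SG bad (Term.subst a A t) n := by
  intro m
  induction m with
  | zero => intro t ht; have := size_pos t; omega
  | succ m ih =>
      intro t ht bad n hs
      cases t with
      | var x =>
          simp only [SG, List.mem_cons, not_or] at hs
          rw [Term.subst, if_neg hs.1]
          exact hs.2
      | app u v =>
          rw [Term.subst]
          simp only [SG] at *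
          exact ih u (by simp [Term.size] at ht ⊢; omega) bad (n+1) hs
      | lam y u =>
          cases n with
          | zero => exact hs.elim
          | succ n =>
              simp only [SG] at hs
              by_cases hya : y = a
              · rw [Term.subst, if_pos hya]
                subst hya
                simp only [SG]
                refine SG_congr u n (y :: y :: bad) (y :: bad) ?_ hs
                intro w; simp only [List.mem_cons]; tauto
              · by_cases hc : y ∈ A.fv ∧ a ∈ u.fv
                · rw [Term.subst, if_neg hya, if_pos hc]
                  set z := Term.fresh (A.fv ++ u.fv ++ [a, y]) with hzdef
                  have hzu : z ∉ u.fv := by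
                    intro hm
                    exact fresh_not_mem _ z (by simp [hm]) rfl
                  have hza : z ≠ a := by
                    intro h
                    exact fresh_not_mem (A.fv ++ u.fv ++ [a, y]) a (by simp) h.symm
                  have hzy : z ≠ y := by
                    intro h
                    exact fresh_not_mem (A.fv ++ u.fv ++ [a, y]) y (by simp) h.symm
                  have h2 : SG (z :: y :: a :: bad) u n :=
                    (SG_cons_iff u n (y :: a :: bad) z hzu).2 hs
                  have h3 : SG (z :: y :: a :: bad) (u.rename y z) n :=
                    SG_rename_mem u n _ y z (by simp) (by simp) h2
                  have h4 : SG (y :: z :: a :: bad) (u.rename y z) n :=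
                    SG_congr _ n _ _ (by intro w; simp only [List.mem_cons]; tauto) h3
                  have h5 : y ∉ (u.rename y z).fv := fv_rename_self u y z (Ne.symm hzy)
                  have h6 : SG (z :: a :: bad) (u.rename y z) n :=
                    (SG_cons_iff _ n _ y h5).1 h4
                  have h7 : SG (a :: z :: bad) (u.rename y z) n :=
                    SG_congr _ n _ _ (by intro w; simp only [List.mem_cons]; tauto) h6
                  have h8 : SG (z :: bad) (Term.subst a A (u.rename y z)) n := by
                    refine ih (u.rename y z) ?_ (z :: bad) n h7
                    rw [Term.size_rename]
                    simp [Term.size] at ht ⊢; omega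
                  simpa only [SG] using h8
                · rw [Term.subst, if_neg hya, if_neg hc]
                  have h1 : SG (a :: y :: bad) u n :=
                    SG_congr _ n _ _ (by intro w; simp only [List.mem_cons]; tauto) hs
                  have := ih u (by simp [Term.size] at ht ⊢; omega) (y :: bad) n h1
                  simpa only [SG] using this

theorem SG_subst (a : Name) (A : Term) (t : Term) (bad : List Name) (n : Nat)
    (hs : SG (a :: bad) t n) : SG bad (Term.subst a A t) n :=
  SG_subst_aux a A t.size t le_rfl bad n hs

/-- β-steps preserve spine goodness. -/
theorem SG_beta : ∀ {t t' : Term}, Beta t t' → ∀ (bad : List Name) (n : Nat),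
    SG bad t n → SG bad t' n := by
  intro t t' hb
  induction hb with
  | redex x u v =>
      intro bad n hs
      simp only [SG] at hs
      exact SG_subst x v u bad n hs
  | appL v hb ih =>
      intro bad n hs
      simp only [SG] at *
      exact ih bad (n+1) hs
  | appR u hb =>
      intro bad n hs
      simp only [SG] at *
      exact hs
  | lamC x hb ih =>
      intro bad n hs
      cases n with
      | zero => exact hs.elim
      | succ n =>
          simp only [SG] at *
          exact ih (x :: bad) n hs

theorem SG_betaStar {t t' : Term} (hb : BetaStar t t') (hs : SG [] t 0) : SG [] t' 0 := by
  induction hb with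
  | refl => exact hs
  | tail _ h ih => exact SG_beta h [] 0 ih

/-- Generalized-redex membership from a positive pending count. -/
theorem gr_of_pend : ∀ (t : Term) (n : Nat) (q : Pos) (x : Name) (u : Term) (m : Nat),
    Term.subtermAt t q = some (.lam x u) → pendAt t q n = some m → 0 < m →
    q ∈ (t.gr.map Prod.fst) ∨ q ∈ (t.lamListPos.take n) := by
  intro t
  induction t with
  | var z =>
      intro n q x u m h1 h2 _
      cases q with
      | nil => simp [Term.subtermAt] at h1
      | cons i p => simp [Term.subtermAt] at h1
  | lam w b ih =>
      intro n q x u m h1 h2 hm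
      cases q with
      | nil =>
          simp only [pendAt] at h2
          injection h2 with h2
          subst h2
          right
          cases n with
          | zero => omega
          | succ n => simp [Term.lamListPos, List.take_succ_cons]
      | cons i p =>
          match i with
          | 0 =>
              simp only [Term.subtermAt] at h1
              simp only [pendAt] at h2
              rcases ih (n - 1) p x u m h1 h2 hm with h | h
              · left
                rcases List.mem_map.1 h with ⟨r, hr, hrr⟩
                refine List.mem_map.2 ⟨((0 : Nat) :: r.1, (0 : Nat) :: r.2), ?_, by simp [hrr]⟩
                simp only [Term.gr, List.mem_map]
                exact ⟨r, hr, rfl⟩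
              · right
                cases n with
                | zero => simp at h
                | succ n =>
                    simp only [Term.lamListPos, List.take_succ_cons, List.mem_cons]
                    right
                    rw [← List.map_take]
                    simp only [List.mem_map]
                    exact ⟨p, by simpa using h, rfl⟩
          | 1 => simp [Term.subtermAt] at h1
          | (k + 2) => simp [Term.subtermAt] at h1
  | app U V ihU ihV =>
      intro n q x u m h1 h2 hm
      cases q with
      | nil => simp [Term.subtermAt] at h1
      | cons i p =>
          match i with
          | 0 =>
              simp only [Term.subtermAt] at h1
              simp only [pendAt] at h2
              rcases ihU (n + 1) p x u m h1 h2 hm with h | h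
              · left
                rcases List.mem_map.1 h with ⟨r, hr, hrr⟩
                refine List.mem_map.2 ⟨((0 : Nat) :: r.1, (0 : Nat) :: r.2), ?_, by simp [hrr]⟩
                simp only [Term.gr, List.mem_append]
                refine Or.inl (Or.inr ?_)
                exact List.mem_map.2 ⟨r, hr, rfl⟩
              · cases hU : U.lamListPos with
                | nil => rw [hU] at h; simp at h
                | cons q0 rest =>
                    rw [hU, List.take_succ_cons, List.mem_cons] at h
                    rcases h with h | h
                    · left
                      subst h
                      simp [Term.gr, hU]
                    · right
                      simp only [Term.lamListPos, hU, List.map_cons, List.tail_cons]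
                      rw [← List.map_take]
                      simp only [List.mem_map]
                      exact ⟨p, h, rfl⟩
          | 1 =>
              simp only [Term.subtermAt] at h1
              simp only [pendAt] at h2
              rcases ihV 0 p x u m h1 h2 hm with h | h
              · left
                rcases List.mem_map.1 h with ⟨r, hr, hrr⟩
                refine List.mem_map.2 ⟨((1 : Nat) :: r.1, (1 : Nat) :: r.2), ?_, by simp [hrr]⟩
                simp only [Term.gr, List.mem_append]
                refine Or.inr ?_
                exact List.mem_map.2 ⟨r, hr, rfl⟩
              · simp at h
          | (k + 2) => simp [Term.subtermAt] at h1

theorem lookup_of_mem_fst : ∀ (l : List (Name × Pos)) (x : Name),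
    x ∈ l.map Prod.fst → ∃ q, l.lookup x = some q := by
  intro l
  induction l with
  | nil => intro x h; simp at h
  | cons e l ih =>
      intro x h
      obtain ⟨k, v⟩ := e
      by_cases hx : x = k
      · subst hx
        refine ⟨v, ?_⟩
        have hb : (x == x) = true := beq_self_eq_true x
        simp [List.lookup, hb]
      · simp only [List.map_cons, List.mem_cons] at h
        rcases h with h | h
        · exact absurd h hx
        · obtain ⟨q, hq⟩ := ih x h
          refine ⟨q, ?_⟩
          have hb : (x == k) = false := beq_eq_false_iff_ne.2 hx
          simp [List.lookup, hb, hq]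

/-- Main lemma for part (A): a clean lloc-scan yields spine goodness. -/
theorem lloc_SG (M : Term) :
    ∀ (t : Term) (pos : Pos) (env : List (Name × Pos)) (n : Nat),
      (∀ p, Term.subtermAt M (pos ++ p) = Term.subtermAt t p) →
      (∀ p, pendAt M (pos ++ p) 0 = pendAt t p n) →
      (∀ p, Term.binderAux M (pos ++ p) [] [] = Term.binderAux t p pos env) →
      (∀ y q, env.lookup y = some q → q ∈ (M.gr.map Prod.fst)) →
      Term.llocAux M t pos = none →
      t.lamList.length ≤ n →
      SG (env.map Prod.fst) t n := by
  intro t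
  induction t with
  | var x =>
      intro pos env n i0 i3 i1 i4 h hl
      simp only [SG]
      intro hmem
      obtain ⟨q, hq⟩ := lookup_of_mem_fst env x hmem
      have hb : Term.binderOf M pos = some q := by
        have := i1 []
        simp only [List.append_nil] at this
        unfold Term.binderOf
        rw [this]
        simp [Term.binderAux, hq]
      have hmemq := i4 x q hq
      have hinv : Term.involvedB M pos = true := by
        unfold Term.involvedB
        rw [List.any_eq_true]
        simp only [List.mem_map] at hmemq
        obtain ⟨r, hr, hrq⟩ := hmemq
        exact ⟨r, hr, by simp [hb, hrq]⟩
      simp only [Term.llocAux, hinv] at h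
      simp at h
  | app U V ihU ihV =>
      intro pos env n i0 i3 i1 i4 h hl
      simp only [SG]
      have hU : Term.llocAux M U (pos ++ [0]) = none := by
        simp only [Term.llocAux] at h
        cases hc : Term.llocAux M U (pos ++ [0]) with
        | none => rfl
        | some q => rw [hc] at h; simp at h
      refine ihU (pos ++ [0]) env (n + 1) ?_ ?_ ?_ i4 hU ?_
      · intro p
        rw [List.append_assoc]
        have := i0 (0 :: p)
        simpa [Term.subtermAt] using this
      · intro p
        rw [List.append_assoc]
        have := i3 (0 :: p)
        simpa [pendAt] using this
      · intro p
        rw [List.append_assoc]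
        have := i1 (0 :: p)
        simpa [Term.binderAux] using this
      · simp only [Term.lamList, List.length_tail] at hl ⊢
        omega
  | lam x u ih =>
      intro pos env n i0 i3 i1 i4 h hl
      have hn : 1 ≤ n := by
        simp only [Term.lamList, List.length_cons] at hl
        omega
      obtain ⟨n', rfl⟩ : ∃ n', n = n' + 1 := ⟨n - 1, by omega⟩
      simp only [SG]
      have hsub : Term.subtermAt M pos = some (.lam x u) := by
        have := i0 []
        simpa [Term.subtermAt] using this
      have hpend : pendAt M pos 0 = some (n' + 1) := by
        have := i3 []
        simpa [pendAt] using this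
      have hpos : pos ∈ (M.gr.map Prod.fst) := by
        rcases gr_of_pend M 0 pos x u (n' + 1) hsub hpend (by omega) with h | h
        · exact h
        · simp at h
      have hu : Term.llocAux M u (pos ++ [0]) = none := by
        simpa [Term.llocAux] using h
      have := ih (pos ++ [0]) ((x, pos) :: env) n' ?_ ?_ ?_ ?_ hu ?_
      · simpa using this
      · intro p
        rw [List.append_assoc]
        have := i0 (0 :: p)
        simpa [Term.subtermAt] using this
      · intro p
        rw [List.append_assoc]
        have := i3 (0 :: p)
        simpa [pendAt] using this
      · intro p
        rw [List.append_assoc]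
        have := i1 (0 :: p)
        simpa [Term.binderAux] using this
      · intro y q hq
        by_cases hyx : y = x
        · subst hyx
          simp [List.lookup] at hq
          subst hq
          exact hpos
        · refine i4 y q ?_
          have hb : (y == x) = false := beq_eq_false_iff_ne.2 hyx
          simpa [List.lookup, hb] using hq
      · simp only [Term.lamList, List.length_cons] at hl
        omega

end Stmt15Aux

namespace Stmt15
open ULC

/-- (i) A β-normal term with empty head lambda-list is not
an abstraction.  (ii) A quasi normal form with empty head lambda-list that
has a β-normal form has a β-normal form which is not an abstraction. -/
theorem qnf_betanf_not_abstraction (M : Term) :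
    (IsBetaNormal M → M.lamList = [] → ∀ x u, M ≠ .lam x u) ∧
    (Qnf M → M.lamList = [] →
      ∀ N, BetaStar M N → IsBetaNormal N → ∀ x u, N ≠ .lam x u) := by
  constructor
  · intro _ hl x u hM
    subst hM
    simp [Term.lamList] at hl
  · intro hq hl N hstar _ x u hN
    have hsg : Stmt15Aux.SG [] M 0 := by
      refine Stmt15Aux.lloc_SG M M [] [] 0 (fun p => by simp) (fun p => by simp)
        (fun p => by simp) (by simp) ?_ (by simp [hl])
      exact hq
    have hend := Stmt15Aux.SG_betaStar hstar hsg
    subst hN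
    simpa [Stmt15Aux.SG] using hend

end Stmt15
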